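/- Let k be a field and let f_1, ..., f_r ∈ k[x] be polynomials generating the unit ideal of k[x] (i.e., the ideal (f_1, ..., f_r) equals all of k[x]). Let m ≥ 0 be an integer and set d := max_{1 ≤ i ≤ r} deg(f_i). Define the k-vector subspace V of k[x] by V := { f_1 g_1 + ... + f_r g_r : g_1, ..., g_r ∈ k[x], deg(g_j) < m for all 1 ≤ j ≤ r }. Then dim_k(V) ≥ min(2m, m + d). -/

import Mathlib

open Polynomial

namespace Stmt0Aux

variable {k : Type*} [Field k]

/-- The `k`-linear map `k[X] → AdjoinRoot F` given by the quotient map. -/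
noncomputable def Lmk (F : k[X]) : k[X] →ₗ[k] AdjoinRoot F where
  toFun := AdjoinRoot.mk F
  map_add' := fun a b => map_add _ a b
  map_smul' := fun c p => by simp [AdjoinRoot.smul_mk]

@[simp] lemma Lmk_apply (F p : k[X]) : Lmk F p = AdjoinRoot.mk F p := rfl

/-- The set of combinations `∑ f i * g i` with `deg (g i) < j`. -/
def SS (r : ℕ) (f : Fin r → k[X]) (j : ℕ) : Set k[X] :=
  {h : k[X] | ∃ g : Fin r → k[X],
    (∀ i, (g i).degree < (j : WithBot ℕ)) ∧ h = ∑ i, f i * g i}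

lemma mem_SS {r : ℕ} (f : Fin r → k[X]) {j : ℕ} (i : Fin r) {g : k[X]}
    (hg : g.degree < (j : WithBot ℕ)) : f i * g ∈ SS r f j := by
  classical
  refine ⟨Pi.single i g, ?_, ?_⟩
  · intro i'
    rcases eq_or_ne i' i with rfl | hne
    · simpa using hg
    · rw [Pi.single_eq_of_ne hne, degree_zero]
      exact_mod_cast WithBot.bot_lt_coe j
  · rw [Fintype.sum_eq_single i]
    · simp
    · intro i' hne
      rw [Pi.single_eq_of_ne hne, mul_zero]

lemma SS_mono {r : ℕ} (f : Fin r → k[X]) {j j' : ℕ} (h : j ≤ j') :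
    SS r f j ⊆ SS r f j' := by
  rintro x ⟨g, hg, rfl⟩
  exact ⟨g, fun i => lt_of_lt_of_le (hg i) (WithBot.coe_le_coe.2 h), rfl⟩

lemma SS_subset_degreeLT {r : ℕ} (f : Fin r → k[X]) {d j : ℕ}
    (hfd : ∀ i, (f i).natDegree ≤ d) :
    SS r f j ⊆ ↑(degreeLT k (d + j)) := by
  rintro x ⟨g, hg, rfl⟩
  rw [SetLike.mem_coe, mem_degreeLT]
  refine lt_of_le_of_lt (degree_sum_le _ _) ?_
  rw [Finset.sup_lt_iff (by exact WithBot.bot_lt_coe _)]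
  intro i _
  rcases eq_or_ne (f i * g i) 0 with h0 | h0
  · rw [h0, degree_zero]; exact WithBot.bot_lt_coe _
  · have hfi : f i ≠ 0 := left_ne_zero_of_mul h0
    have hgi : g i ≠ 0 := right_ne_zero_of_mul h0
    rw [← natDegree_lt_iff_degree_lt h0]
    have h1 : (g i).natDegree < j := (natDegree_lt_iff_degree_lt hgi).2 (hg i)
    have h2 := natDegree_mul_le (p := f i) (q := g i)
    have := hfd i
    omega

end Stmt0Aux

open Stmt0Aux

set_option synthInstance.maxHeartbeats 400000 in
/-- Let `k` be a field and `f 1, …, f r ∈ k[x]` polynomials generating the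
unit ideal of `k[x]`. Let `m ≥ 0` and `d := max_{1 ≤ i ≤ r} deg (f i)`.  If
`V = { f 1 * g 1 + ⋯ + f r * g r : deg (g j) < m for all j }`, then
`dim_k V ≥ min (2 m) (m + d)`. -/
theorem stmt_0 {k : Type*} [Field k] (r : ℕ) (hr : 1 ≤ r)
    (f : Fin r → Polynomial k)
    (hunit : Ideal.span (Set.range f) = (⊤ : Ideal (Polynomial k)))
    (m : ℕ) (d : ℕ) (hd : d = Finset.univ.sup fun i => (f i).natDegree)
    (V : Submodule k (Polynomial k))
    (hV : V = Submodule.span k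
      {h : Polynomial k | ∃ g : Fin r → Polynomial k,
        (∀ i, (g i).degree < (m : WithBot ℕ)) ∧ h = ∑ i, f i * g i}) :
    min (2 * m) (m + d) ≤ Module.finrank k V := by
  classical
  haveI : Nonempty (Fin r) := ⟨⟨0, hr⟩⟩
  subst hV
  -- basic degree facts
  have hfd : ∀ i, (f i).natDegree ≤ d := by
    intro i; rw [hd]; exact Finset.le_sup (f := fun i => (f i).natDegree) (Finset.mem_univ i)
  have hex : ∃ i, f i ≠ 0 := by
    by_contra h
    push_neg at h
    have h1 : (1 : Polynomial k) ∈ Ideal.span (Set.range f) := by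
      rw [hunit]; trivial
    rw [Ideal.mem_span_range_iff_exists_fun] at h1
    obtain ⟨c, hc⟩ := h1
    simp [h] at hc
  obtain ⟨i0, hF0, hFd⟩ : ∃ i, f i ≠ 0 ∧ (f i).natDegree = d := by
    rcases Nat.eq_zero_or_pos d with hd0 | hdpos
    · obtain ⟨i, hi⟩ := hex
      exact ⟨i, hi, le_antisymm (hd0 ▸ hfd i) (by omega)⟩
    · have hne : (Finset.univ : Finset (Fin r)).Nonempty := Finset.univ_nonempty
      obtain ⟨i, -, hi⟩ := Finset.exists_mem_eq_sup (Finset.univ : Finset (Fin r))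
        hne (fun i => (f i).natDegree)
      refine ⟨i, ?_, (hd ▸ hi).symm⟩
      intro h0
      rw [h0] at hi
      simp [← hd] at hi
      omega
  set F : Polynomial k := f i0 with hFdef
  -- the quotient ring A = k[X]/(F)
  haveI : FiniteDimensional k (AdjoinRoot F) :=
    Module.Finite.of_basis (AdjoinRoot.powerBasis hF0).basis
  have hAdim : Module.finrank k (AdjoinRoot F) = d := by
    rw [(AdjoinRoot.powerBasis hF0).finrank, AdjoinRoot.powerBasis_dim, hFd]
  -- the family of images W j
  set W : ℕ → Submodule k (AdjoinRoot F) :=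
    fun j => Submodule.map (Lmk F) (Submodule.span k (SS r f j)) with hW
  have hWmono : ∀ {j j' : ℕ}, j ≤ j' → W j ≤ W j' := by
    intro j j' h
    exact Submodule.map_mono (Submodule.span_mono (SS_mono f h))
  -- multiplication by the root sends W j into W (j+1)
  have hroot : ∀ (j : ℕ) (w : AdjoinRoot F), w ∈ W j →
      AdjoinRoot.root F * w ∈ W (j + 1) := by
    intro j w hw
    rw [hW] at hw
    simp only [Submodule.map_span] at hw
    induction hw using Submodule.span_induction with
    | mem x hx =>
      obtain ⟨h, hh, rfl⟩ := hx
      obtain ⟨g, hg, rfl⟩ := hh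
      have hXmem : X * ∑ i, f i * g i ∈ SS r f (j + 1) := by
        refine ⟨fun i => X * g i, ?_, ?_⟩
        · intro i
          dsimp only
          rcases eq_or_ne (g i) 0 with h0 | h0
          · rw [h0, mul_zero, degree_zero]
            exact WithBot.bot_lt_coe _
          · have h1 : (g i).natDegree < j := (natDegree_lt_iff_degree_lt h0).2 (hg i)
            have h2 : X * g i ≠ 0 := mul_ne_zero X_ne_zero h0
            rw [← natDegree_lt_iff_degree_lt h2, natDegree_mul X_ne_zero h0,
              natDegree_X]
            omega
        · rw [Finset.mul_sum]
          congr 1; ext i; ring_nf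
      have : AdjoinRoot.root F * Lmk F (∑ i, f i * g i) = Lmk F (X * ∑ i, f i * g i) := by
        rw [Lmk_apply, Lmk_apply, map_mul (AdjoinRoot.mk F), AdjoinRoot.mk_X]
      rw [this]
      exact ⟨_, Submodule.subset_span hXmem, rfl⟩
    | zero => rw [mul_zero]; exact zero_mem _
    | add x y _ _ hx hy => rw [mul_add]; exact add_mem hx hy
    | smul c x _ hx => rw [mul_smul_comm]; exact Submodule.smul_mem _ _ hx
  -- if W stabilizes, it is everything
  have hKK : ∀ j : ℕ, W (j + 1) ≤ W j → W j = ⊤ := by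
    intro j hstep
    have hfi : ∀ i, AdjoinRoot.mk F (f i) ∈ W j := by
      intro i
      apply hstep
      have : f i * 1 ∈ SS r f (j + 1) := by
        apply mem_SS
        rw [degree_one]
        exact_mod_cast WithBot.coe_lt_coe.2 (Nat.succ_pos j)
      refine ⟨f i * 1, Submodule.subset_span this, ?_⟩
      simp
    have hmul : ∀ (p : Polynomial k) (w : AdjoinRoot F), w ∈ W j →
        AdjoinRoot.mk F p * w ∈ W j := by
      intro p
      induction p using Polynomial.induction_on with
      | C a =>
        intro w hw
        rw [AdjoinRoot.mk_C, ← AdjoinRoot.algebraMap_eq, ← Algebra.smul_def]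
        exact Submodule.smul_mem _ _ hw
      | add p q hp hq =>
        intro w hw
        rw [map_add, add_mul]
        exact add_mem (hp w hw) (hq w hw)
      | monomial n a hn =>
        intro w hw
        have : (C a * X ^ (n + 1)) = (C a * X ^ n) * X := by ring
        rw [this, map_mul, AdjoinRoot.mk_X, mul_assoc]
        exact hn _ (hstep (hroot j w hw))
    have hone : (1 : AdjoinRoot F) ∈ W j := by
      have h1 : (1 : Polynomial k) ∈ Ideal.span (Set.range f) := by
        rw [hunit]; trivial
      rw [Ideal.mem_span_range_iff_exists_fun] at h1
      obtain ⟨c, hc⟩ := h1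
      have : (1 : AdjoinRoot F) = ∑ i, AdjoinRoot.mk F (c i) * AdjoinRoot.mk F (f i) := by
        rw [← map_one (AdjoinRoot.mk F), ← hc, map_sum]
        simp [map_mul]
      rw [this]
      exact Submodule.sum_mem _ fun i _ => hmul (c i) _ (hfi i)
    rw [eq_top_iff]
    intro a _
    obtain ⟨p, rfl⟩ := AdjoinRoot.mk_surjective (g := F) a
    have := hmul p 1 hone
    rwa [mul_one] at this
  -- the rank of W grows
  have hWrank : ∀ j : ℕ, min j d ≤ Module.finrank k (W j) := by
    intro j
    induction j with
    | zero => simp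
    | succ j ih =>
      by_cases htop : W j = ⊤
      · have h1 : W (j + 1) = ⊤ := eq_top_iff.2 (htop ▸ hWmono (Nat.le_succ j))
        rw [h1, finrank_top, hAdim]
        omega
      · have hne : W j ≠ W (j + 1) := by
          intro h
          exact htop (hKK j (le_of_eq h.symm))
        have hlt : W j < W (j + 1) := lt_of_le_of_ne (hWmono (Nat.le_succ j)) hne
        have := Submodule.finrank_lt_finrank_of_lt hlt
        omega
  -- set up the linear map from V
  show min (2 * m) (m + d) ≤ Module.finrank k (Submodule.span k (SS r f m))
  set Vs : Submodule k (Polynomial k) := Submodule.span k (SS r f m) with hVs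
  have hVsle : Vs ≤ degreeLT k (d + m) :=
    Submodule.span_le.2 (SS_subset_degreeLT f hfd)
  haveI : FiniteDimensional k (degreeLT k (d + m)) :=
    Module.Finite.equiv (degreeLTEquiv k (d + m)).symm
  haveI : FiniteDimensional k Vs := Submodule.finiteDimensional_of_le hVsle
  set φ : Vs →ₗ[k] AdjoinRoot F := (Lmk F).comp Vs.subtype with hφ
  have hrange : LinearMap.range φ = W m := by
    rw [hφ, LinearMap.range_comp, Submodule.range_subtype, hW]
  -- the kernel contains F • (degreeLT m)
  have hFg : ∀ g : degreeLT k m, F * (g : Polynomial k) ∈ Vs := by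
    intro g
    exact Submodule.subset_span (mem_SS f i0 (mem_degreeLT.1 g.2))
  have hkerm : (m : ℕ) ≤ Module.finrank k (LinearMap.ker φ) := by
    set ι : degreeLT k m →ₗ[k] LinearMap.ker φ :=
      LinearMap.codRestrict (LinearMap.ker φ)
        (LinearMap.codRestrict Vs
          ((LinearMap.mulLeft k F).comp (degreeLT k m).subtype)
          (fun g => hFg g))
        (fun g => by
          rw [LinearMap.mem_ker]
          show Lmk F (F * (g : Polynomial k)) = 0
          rw [Lmk_apply, map_mul, AdjoinRoot.mk_self, zero_mul]) with hι
    have hinj : Function.Injective ι := by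
      intro a b hab
      have h2 : ((ι a : Vs) : Polynomial k) = ((ι b : Vs) : Polynomial k) := by
        rw [Subtype.ext_iff.mp hab]
      have h1 : F * (a : Polynomial k) = F * (b : Polynomial k) := h2
      exact Subtype.ext (mul_left_cancel₀ hF0 h1)
    calc (m : ℕ) = Module.finrank k (degreeLT k m) := by
          rw [(degreeLTEquiv k m).finrank_eq, Module.finrank_fin_fun]
      _ ≤ Module.finrank k (LinearMap.ker φ) :=
          LinearMap.finrank_le_finrank_of_injective hinj
  have hrn := LinearMap.finrank_range_add_finrank_ker φ
  have hrk : min m d ≤ Module.finrank k (LinearMap.range φ) := by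
    rw [hrange]; exact hWrank m
  have harith : min (2 * m) (m + d) = min m d + m := by omega
  rw [harith, ← hrn]
  exact add_le_add hrk hkerm
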